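/- Characterization of L-rationalizability: fix an anchor p. For every level k ≥ 1, reasoning order n ≥ 0, and player i: if n < k then the set of n-L-rationalizable actions of type θ_{i,k} equals R^n_i (the n-rationalizable actions of the complete-information game), and if n ≥ k it equals L^k_i[p], the classic level-k behavior of player i under anchor p. -/
import Mathlib


open Finset

/-- A probability distribution (as weights) on a finite set. -/
def IsDist {B : Type} [Fintype B] (ν : B → ℝ) : Prop :=
  (∀ b, 0 ≤ ν b) ∧ ∑ b, ν b = 1

/-- `a` is a best reply to the conjecture `ν` (weights on the co-player's actions). -/
def isBR {A B : Type} [Fintype A] [Fintype B] (u : A → B → ℝ) (ν : B → ℝ) (a : A) : Prop :=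
  ∀ a' : A, ∑ b, ν b * u a' b ≤ ∑ b, ν b * u a b

/-- `a` is strictly dominated by some mixed action. -/
def Dominated {A B : Type} [Fintype A] [Fintype B] (u : A → B → ℝ) (a : A) : Prop :=
  ∃ α : A → ℝ, IsDist α ∧ ∀ b : B, (∑ a', α a' * u a' b) > u a b

/-- One step of iterated elimination: best replies (within `S`) to conjectures on `T`. -/
def BRstep {A B : Type} [Fintype A] [Fintype B] (u : A → B → ℝ) (S : Set A) (T : Set B) :
    Set A :=
  {a | a ∈ S ∧ ∃ ν : B → ℝ, IsDist ν ∧ (∀ b, ν b ≠ 0 → b ∈ T) ∧ isBR u ν a}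

/-- `n`-rationalizability in the complete-information game. -/
def Rseq {A B : Type} [Fintype A] [Fintype B] (u1 : A → B → ℝ) (u2 : B → A → ℝ) :
    ℕ → Set A × Set B
  | 0 => (Set.univ, Set.univ)
  | n + 1 =>
    (BRstep u1 (Rseq u1 u2 n).1 (Rseq u1 u2 n).2,
     BRstep u2 (Rseq u1 u2 n).2 (Rseq u1 u2 n).1)

/-- Best replies to conjectures concentrated on `T`. -/
def Lstep {A B : Type} [Fintype A] [Fintype B] (u : A → B → ℝ) (T : Set B) : Set A :=
  {a | ∃ ν : B → ℝ, IsDist ν ∧ (∀ b, ν b ≠ 0 → b ∈ T) ∧ isBR u ν a}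

/-- The classic level-k solution under anchor `(p1, p2)`; `Lk … k` is level-`k` behavior
(meaningful for `k ≥ 1`). -/
def Lk {A B : Type} [Fintype A] [Fintype B] (u1 : A → B → ℝ) (u2 : B → A → ℝ)
    (p1 : A → ℝ) (p2 : B → ℝ) : ℕ → Set A × Set B
  | 0 => (Set.univ, Set.univ)
  | 1 => ({a | isBR u1 p2 a}, {b | isBR u2 p1 b})
  | k + 2 =>
    (Lstep u1 (Lk u1 u2 p1 p2 (k + 1)).2,
     Lstep u2 (Lk u1 u2 p1 p2 (k + 1)).1)

/-- A Ĝ-conjecture over the co-player's (level-type, action) pairs: a finitely supported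
type-marginal together with conditional action distributions. -/
structure GConj (B : Type) [Fintype B] where
  m : ℕ →₀ ℝ
  m_nonneg : ∀ t, 0 ≤ m t
  m_sum : (m.sum fun _ w => w) = 1
  cond : ℕ → B → ℝ
  cond_dist : ∀ t, IsDist (cond t)

/-- Marginal of a Ĝ-conjecture on the co-player's actions. -/
noncomputable def margAct {B : Type} [Fintype B] (μ : GConj B) : B → ℝ :=
  fun b => μ.m.sum fun t w => w * μ.cond t b

/-- (K1): conditional on the co-player being of type 0 (if deemed possible),
play follows the anchor `q`. -/
def K1 {B : Type} [Fintype B] (q : B → ℝ) (μ : GConj B) : Prop :=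
  μ.m 0 ≠ 0 → μ.cond 0 = q

/-- (K2): only co-player types strictly below `k` are deemed possible. -/
def K2 {B : Type} [Fintype B] (k : ℕ) (μ : GConj B) : Prop :=
  ∀ t, μ.m t ≠ 0 → t < k

/-- (KL): only the co-player type `k - 1` is deemed possible. -/
def KL {B : Type} [Fintype B] (k : ℕ) (μ : GConj B) : Prop :=
  ∀ t, μ.m t ≠ 0 → t = k - 1

/-- Truncation `f^k` of the level distribution `f` at `k`. -/
noncomputable def ftrunc (f : ℕ → ℝ) (k t : ℕ) : ℝ :=
  f t / ∑ t' ∈ Finset.range k, f t'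

/-- (KC): the type-marginal equals the truncation of `f` at `k`. -/
def KC {B : Type} [Fintype B] (f : ℕ → ℝ) (k : ℕ) (μ : GConj B) : Prop :=
  ∀ t < k, μ.m t = ftrunc f k t

/-- A full-support level distribution on ℕ. -/
def FullDist (f : ℕ → ℝ) : Prop :=
  (∀ t, 0 < f t) ∧ HasSum f 1

/-- One step of Δ-rationalizability for one player, under belief restrictions `Δ`
(type-0 pairs always survive, since type-0 payoffs are constant). -/
def Dstep {A B : Type} [Fintype A] [Fintype B] (u : A → B → ℝ)
    (Δ : ℕ → GConj B → Prop) (S : Set (ℕ × A)) (T : Set (ℕ × B)) : Set (ℕ × A) :=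
  {x | x ∈ S ∧ (x.1 = 0 ∨ ∃ μ : GConj B, Δ x.1 μ ∧
      (∀ t b, μ.m t ≠ 0 → μ.cond t b ≠ 0 → (t, b) ∈ T) ∧ isBR u (margAct μ) x.2)}

/-- Δ-rationalizability in the derived game with payoff uncertainty. -/
def DeltaRat {A B : Type} [Fintype A] [Fintype B] (u1 : A → B → ℝ) (u2 : B → A → ℝ)
    (Δ1 : ℕ → GConj B → Prop) (Δ2 : ℕ → GConj A → Prop) :
    ℕ → Set (ℕ × A) × Set (ℕ × B)
  | 0 => (Set.univ, Set.univ)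
  | n + 1 =>
    (Dstep u1 Δ1 (DeltaRat u1 u2 Δ1 Δ2 n).1 (DeltaRat u1 u2 Δ1 Δ2 n).2,
     Dstep u2 Δ2 (DeltaRat u1 u2 Δ1 Δ2 n).2 (DeltaRat u1 u2 Δ1 Δ2 n).1)

/-- Belief restrictions for downward rationalizability: (K1) and (K2). -/
def DownR {B : Type} [Fintype B] (q : B → ℝ) : ℕ → GConj B → Prop :=
  fun k μ => K1 q μ ∧ K2 k μ

/-- Belief restrictions for L-rationalizability: (K1), (K2) and (KL). -/
def LR {B : Type} [Fintype B] (q : B → ℝ) : ℕ → GConj B → Prop :=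
  fun k μ => K1 q μ ∧ K2 k μ ∧ KL k μ

/-- Belief restrictions for C-rationalizability: (K1), (K2) and (KC). -/
def CR {B : Type} [Fintype B] (q : B → ℝ) (f : ℕ → ℝ) : ℕ → GConj B → Prop :=
  fun k μ => K1 q μ ∧ K2 k μ ∧ KC f k μ

section Sets

variable {A B : Type} [Fintype A] [Fintype B]

/-- `n`-downward-rationalizable actions of player 1's type `θ_{1,k}`. -/
def DSet (u1 : A → B → ℝ) (u2 : B → A → ℝ) (p1 : A → ℝ) (p2 : B → ℝ) (n k : ℕ) : Set A :=
  {a | (k, a) ∈ (DeltaRat u1 u2 (DownR p2) (DownR p1) n).1}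

/-- `n`-downward-rationalizable actions of player 2's type `θ_{2,k}`. -/
def DSet2 (u1 : A → B → ℝ) (u2 : B → A → ℝ) (p1 : A → ℝ) (p2 : B → ℝ) (n k : ℕ) : Set B :=
  {b | (k, b) ∈ (DeltaRat u1 u2 (DownR p2) (DownR p1) n).2}

def DSetInf (u1 : A → B → ℝ) (u2 : B → A → ℝ) (p1 : A → ℝ) (p2 : B → ℝ) (k : ℕ) : Set A :=
  ⋂ n, DSet u1 u2 p1 p2 n k

def DSet2Inf (u1 : A → B → ℝ) (u2 : B → A → ℝ) (p1 : A → ℝ) (p2 : B → ℝ) (k : ℕ) : Set B :=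
  ⋂ n, DSet2 u1 u2 p1 p2 n k

/-- `n`-L-rationalizable actions of player 1's type `θ_{1,k}`. -/
def LSet (u1 : A → B → ℝ) (u2 : B → A → ℝ) (p1 : A → ℝ) (p2 : B → ℝ) (n k : ℕ) : Set A :=
  {a | (k, a) ∈ (DeltaRat u1 u2 (LR p2) (LR p1) n).1}

/-- `n`-L-rationalizable actions of player 2's type `θ_{2,k}`. -/
def LSet2 (u1 : A → B → ℝ) (u2 : B → A → ℝ) (p1 : A → ℝ) (p2 : B → ℝ) (n k : ℕ) : Set B :=
  {b | (k, b) ∈ (DeltaRat u1 u2 (LR p2) (LR p1) n).2}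

def LSetInf (u1 : A → B → ℝ) (u2 : B → A → ℝ) (p1 : A → ℝ) (p2 : B → ℝ) (k : ℕ) : Set A :=
  ⋂ n, LSet u1 u2 p1 p2 n k

def LSet2Inf (u1 : A → B → ℝ) (u2 : B → A → ℝ) (p1 : A → ℝ) (p2 : B → ℝ) (k : ℕ) : Set B :=
  ⋂ n, LSet2 u1 u2 p1 p2 n k

/-- `n`-C-rationalizable actions of player 1's type `θ_{1,k}`. -/
def CSet (u1 : A → B → ℝ) (u2 : B → A → ℝ) (p1 : A → ℝ) (p2 : B → ℝ) (f : ℕ → ℝ)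
    (n k : ℕ) : Set A :=
  {a | (k, a) ∈ (DeltaRat u1 u2 (CR p2 f) (CR p1 f) n).1}

/-- `n`-C-rationalizable actions of player 2's type `θ_{2,k}`. -/
def CSet2 (u1 : A → B → ℝ) (u2 : B → A → ℝ) (p1 : A → ℝ) (p2 : B → ℝ) (f : ℕ → ℝ)
    (n k : ℕ) : Set B :=
  {b | (k, b) ∈ (DeltaRat u1 u2 (CR p2 f) (CR p1 f) n).2}

/-- The Cognitive Hierarchy solution: `CHsol … k` is CH level-`k` behavior (`k ≥ 1`). -/
def CHsol (u1 : A → B → ℝ) (u2 : B → A → ℝ) (p1 : A → ℝ) (p2 : B → ℝ) (f : ℕ → ℝ) :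
    ℕ → Set A × Set B
  | 0 => (Set.univ, Set.univ)
  | 1 => ({a | isBR u1 p2 a}, {b | isBR u2 p1 b})
  | k + 2 =>
    ({a | ∃ μ : GConj B, K2 (k + 2) μ ∧ KC f (k + 2) μ ∧ K1 p2 μ ∧
        (∀ t, 0 < t → ∀ _ : t < k + 2, ∀ b, μ.m t ≠ 0 → μ.cond t b ≠ 0 →
          b ∈ (CHsol u1 u2 p1 p2 f t).2) ∧
        isBR u1 (margAct μ) a},
     {b | ∃ μ : GConj A, K2 (k + 2) μ ∧ KC f (k + 2) μ ∧ K1 p1 μ ∧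
        (∀ t, 0 < t → ∀ _ : t < k + 2, ∀ a, μ.m t ≠ 0 → μ.cond t a ≠ 0 →
          a ∈ (CHsol u1 u2 p1 p2 f t).1) ∧
        isBR u2 (margAct μ) b})
  termination_by k => k

end Sets

section Aux

variable {A B : Type} [Fintype A] [Fintype B]

lemma GConj_m_eq_single (μ : GConj B) (j : ℕ)
    (hsupp : ∀ t, μ.m t ≠ 0 → t = j) : μ.m = Finsupp.single j 1 := by
  have hmj : μ.m = Finsupp.single j (μ.m j) := by
    ext t
    by_cases h : t = j
    · subst h; simp
    · have h0 : μ.m t = 0 := by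
        by_contra hc; exact h (hsupp t hc)
      simp [Finsupp.single_apply, Ne.symm h, h0]
  have hsum := μ.m_sum
  rw [hmj, Finsupp.sum_single_index (by simp)] at hsum
  rw [hmj, hsum]

lemma margAct_single (μ : GConj B) (j : ℕ)
    (hm : μ.m = Finsupp.single j 1) : margAct μ = μ.cond j := by
  funext b
  simp [margAct, hm, Finsupp.sum_single_index]

lemma Dstep_LR_one (u : A → B → ℝ) (q : B → ℝ) (hq : IsDist q)
    (S : Set (ℕ × A)) (T : Set (ℕ × B)) (hT0 : ∀ b, (0, b) ∈ T) (a : A) :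
    (1, a) ∈ Dstep u (LR q) S T ↔ (1, a) ∈ S ∧ isBR u q a := by
  constructor
  · rintro ⟨hS, h⟩
    refine ⟨hS, ?_⟩
    rcases h with h0 | ⟨μ, ⟨hK1, hK2, hKL⟩, hsupp, hBR⟩
    · exact absurd h0 one_ne_zero
    · have hm : μ.m = Finsupp.single 0 1 := GConj_m_eq_single μ 0 (fun t ht => hKL t ht)
      have h0 : μ.cond 0 = q := hK1 (by rw [hm]; simp)
      rwa [margAct_single μ 0 hm, h0] at hBR
  · rintro ⟨hS, hBR⟩
    refine ⟨hS, Or.inr ?_⟩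
    refine ⟨⟨Finsupp.single 0 1, ?_, ?_, fun _ => q, fun _ => hq⟩, ⟨?_, ?_, ?_⟩, ?_, ?_⟩
    · intro t; rw [Finsupp.single_apply]; split <;> norm_num
    · rw [Finsupp.sum_single_index] <;> simp
    · intro _; rfl
    · intro t ht
      have : t = 0 := by
        by_contra hc
        have : (Finsupp.single 0 1 : ℕ →₀ ℝ) t = 0 := by
          rw [Finsupp.single_apply]; simp; omega
        exact ht this
      omega
    · intro t ht
      by_contra hc
      have : (Finsupp.single 0 1 : ℕ →₀ ℝ) t = 0 := by
        rw [Finsupp.single_apply]; simp; omega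
      exact ht this
    · intro t b ht _
      have : t = 0 := by
        by_contra hc
        have : (Finsupp.single 0 1 : ℕ →₀ ℝ) t = 0 := by
          rw [Finsupp.single_apply]; simp; omega
        exact ht this
      subst this; exact hT0 b
    · rwa [margAct_single _ 0 rfl]

lemma Dstep_LR_ge2 (u : A → B → ℝ) (q : B → ℝ)
    (S : Set (ℕ × A)) (T : Set (ℕ × B)) (j : ℕ) (a : A) :
    (j + 2, a) ∈ Dstep u (LR q) S T ↔ (j + 2, a) ∈ S ∧
      ∃ ν : B → ℝ, IsDist ν ∧ (∀ b, ν b ≠ 0 → (j + 1, b) ∈ T) ∧ isBR u ν a := by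
  constructor
  · rintro ⟨hS, h⟩
    refine ⟨hS, ?_⟩
    rcases h with h0 | ⟨μ, ⟨hK1, hK2, hKL⟩, hsupp, hBR⟩
    · exact absurd h0 (by omega)
    · have hm : μ.m = Finsupp.single (j + 1) 1 :=
        GConj_m_eq_single μ (j + 1) (fun t ht => by have := hKL t ht; omega)
      refine ⟨μ.cond (j + 1), μ.cond_dist _, fun b hb => ?_, ?_⟩
      · exact hsupp (j + 1) b (by rw [hm]; simp) hb
      · rwa [margAct_single μ (j + 1) hm] at hBR
  · rintro ⟨hS, ν, hν, hsupp, hBR⟩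
    refine ⟨hS, Or.inr ?_⟩
    refine ⟨⟨Finsupp.single (j + 1) 1, ?_, ?_, fun _ => ν, fun _ => hν⟩, ⟨?_, ?_, ?_⟩, ?_, ?_⟩
    · intro t; rw [Finsupp.single_apply]; split <;> norm_num
    · rw [Finsupp.sum_single_index] <;> simp
    · intro h0; simp [Finsupp.single_apply] at h0
    · intro t ht
      have : t = j + 1 := by
        by_contra hc
        have : (Finsupp.single (j + 1) 1 : ℕ →₀ ℝ) t = 0 := by
          rw [Finsupp.single_apply]; simp; omega
        exact ht this
      omega
    · intro t ht
      have : t = j + 1 := by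
        by_contra hc
        have : (Finsupp.single (j + 1) 1 : ℕ →₀ ℝ) t = 0 := by
          rw [Finsupp.single_apply]; simp; omega
        exact ht this
      omega
    · intro t b ht hb
      have : t = j + 1 := by
        by_contra hc
        have : (Finsupp.single (j + 1) 1 : ℕ →₀ ℝ) t = 0 := by
          rw [Finsupp.single_apply]; simp; omega
        exact ht this
      subst this; exact hsupp b hb
    · rwa [margAct_single _ (j + 1) rfl]

lemma DeltaRat_zero_mem (u1 : A → B → ℝ) (u2 : B → A → ℝ)
    (Δ1 : ℕ → GConj B → Prop) (Δ2 : ℕ → GConj A → Prop) (n : ℕ) :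
    (∀ a, (0, a) ∈ (DeltaRat u1 u2 Δ1 Δ2 n).1) ∧
    (∀ b, (0, b) ∈ (DeltaRat u1 u2 Δ1 Δ2 n).2) := by
  induction n with
  | zero => exact ⟨fun a => trivial, fun b => trivial⟩
  | succ n ih => exact ⟨fun a => ⟨ih.1 a, Or.inl rfl⟩, fun b => ⟨ih.2 b, Or.inl rfl⟩⟩

lemma Rseq_succ_subset (u1 : A → B → ℝ) (u2 : B → A → ℝ) (n : ℕ) :
    (Rseq u1 u2 (n + 1)).1 ⊆ (Rseq u1 u2 n).1 ∧
    (Rseq u1 u2 (n + 1)).2 ⊆ (Rseq u1 u2 n).2 :=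
  ⟨fun _ ha => ha.1, fun _ hb => hb.1⟩

lemma Lstep_Rseq (u1 : A → B → ℝ) (u2 : B → A → ℝ) (n : ℕ) :
    Lstep u1 (Rseq u1 u2 n).2 ⊆ (Rseq u1 u2 (n + 1)).1 ∧
    Lstep u2 (Rseq u1 u2 n).1 ⊆ (Rseq u1 u2 (n + 1)).2 := by
  induction n with
  | zero =>
    constructor
    · rintro a ⟨ν, hν⟩; exact ⟨trivial, ν, hν⟩
    · rintro b ⟨ν, hν⟩; exact ⟨trivial, ν, hν⟩
  | succ n ih =>
    constructor
    · rintro a ⟨ν, hν, hsupp, hBR⟩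
      have h1 : a ∈ (Rseq u1 u2 (n + 1)).1 :=
        ih.1 ⟨ν, hν, fun b hb => (Rseq_succ_subset u1 u2 n).2 (hsupp b hb), hBR⟩
      exact ⟨h1, ν, hν, hsupp, hBR⟩
    · rintro b ⟨ν, hν, hsupp, hBR⟩
      have h1 : b ∈ (Rseq u1 u2 (n + 1)).2 :=
        ih.2 ⟨ν, hν, fun a ha => (Rseq_succ_subset u1 u2 n).1 (hsupp a ha), hBR⟩
      exact ⟨h1, ν, hν, hsupp, hBR⟩

lemma Lk_subset_Rseq (u1 : A → B → ℝ) (u2 : B → A → ℝ) (p1 : A → ℝ) (p2 : B → ℝ)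
    (hp1 : IsDist p1) (hp2 : IsDist p2) (k : ℕ) :
    (Lk u1 u2 p1 p2 k).1 ⊆ (Rseq u1 u2 k).1 ∧
    (Lk u1 u2 p1 p2 k).2 ⊆ (Rseq u1 u2 k).2 := by
  induction k with
  | zero => exact ⟨fun _ _ => trivial, fun _ _ => trivial⟩
  | succ k ih =>
    match k, ih with
    | 0, _ =>
      constructor
      · intro a ha
        exact (Lstep_Rseq u1 u2 0).1 ⟨p2, hp2, fun b _ => trivial, ha⟩
      · intro b hb
        exact (Lstep_Rseq u1 u2 0).2 ⟨p1, hp1, fun a _ => trivial, hb⟩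
    | m + 1, ih =>
      constructor
      · rintro a ⟨ν, hν, hsupp, hBR⟩
        exact (Lstep_Rseq u1 u2 (m + 1)).1 ⟨ν, hν, fun b hb => ih.2 (hsupp b hb), hBR⟩
      · rintro b ⟨ν, hν, hsupp, hBR⟩
        exact (Lstep_Rseq u1 u2 (m + 1)).2 ⟨ν, hν, fun a ha => ih.1 (hsupp a ha), hBR⟩

end Aux

lemma L_master {A B : Type} [Fintype A] [Fintype B]
    (u1 : A → B → ℝ) (u2 : B → A → ℝ) (p1 : A → ℝ) (p2 : B → ℝ)
    (hp1 : IsDist p1) (hp2 : IsDist p2) :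
    ∀ n k, 1 ≤ k →
      (n < k →
        LSet u1 u2 p1 p2 n k = (Rseq u1 u2 n).1 ∧
        LSet2 u1 u2 p1 p2 n k = (Rseq u1 u2 n).2) ∧
      (k ≤ n →
        LSet u1 u2 p1 p2 n k = (Lk u1 u2 p1 p2 k).1 ∧
        LSet2 u1 u2 p1 p2 n k = (Lk u1 u2 p1 p2 k).2) := by
  intro n
  induction n with
  | zero =>
    intro k hk
    refine ⟨fun _ => ⟨?_, ?_⟩, fun h => absurd h (by omega)⟩
    · ext a; simp [LSet, DeltaRat, Rseq]
    · ext b; simp [LSet2, DeltaRat, Rseq]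
  | succ n ih =>
    intro k hk
    have hT0 : ∀ b, (0, b) ∈ (DeltaRat u1 u2 (LR p2) (LR p1) n).2 :=
      (DeltaRat_zero_mem u1 u2 (LR p2) (LR p1) n).2
    have hS0 : ∀ a, (0, a) ∈ (DeltaRat u1 u2 (LR p2) (LR p1) n).1 :=
      (DeltaRat_zero_mem u1 u2 (LR p2) (LR p1) n).1
    match k, hk with
    | 1, _ =>
      have hstep : ∀ a, a ∈ LSet u1 u2 p1 p2 (n + 1) 1 ↔
          a ∈ LSet u1 u2 p1 p2 n 1 ∧ isBR u1 p2 a :=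
        fun a => Dstep_LR_one u1 p2 hp2 _ _ hT0 a
      have hstep2 : ∀ b, b ∈ LSet2 u1 u2 p1 p2 (n + 1) 1 ↔
          b ∈ LSet2 u1 u2 p1 p2 n 1 ∧ isBR u2 p1 b :=
        fun b => Dstep_LR_one u2 p1 hp1 _ _ hS0 b
      have hsub : ∀ a, isBR u1 p2 a → a ∈ LSet u1 u2 p1 p2 n 1 := by
        cases n with
        | zero => intro a _; trivial
        | succ m =>
          intro a ha
          rw [((ih 1 le_rfl).2 (by omega)).1]
          exact ha
      have hsub2 : ∀ b, isBR u2 p1 b → b ∈ LSet2 u1 u2 p1 p2 n 1 := by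
        cases n with
        | zero => intro b _; trivial
        | succ m =>
          intro b hb
          rw [((ih 1 le_rfl).2 (by omega)).2]
          exact hb
      refine ⟨fun h => absurd h (by omega), fun _ => ⟨?_, ?_⟩⟩
      · ext a
        exact ⟨fun h => ((hstep a).mp h).2, fun h => (hstep a).mpr ⟨hsub a h, h⟩⟩
      · ext b
        exact ⟨fun h => ((hstep2 b).mp h).2, fun h => (hstep2 b).mpr ⟨hsub2 b h, h⟩⟩
    | j + 2, _ =>
      have hset : LSet u1 u2 p1 p2 (n + 1) (j + 2) =
          BRstep u1 (LSet u1 u2 p1 p2 n (j + 2)) (LSet2 u1 u2 p1 p2 n (j + 1)) :=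
        Set.ext fun a => Dstep_LR_ge2 u1 p2 _ _ j a
      have hset2 : LSet2 u1 u2 p1 p2 (n + 1) (j + 2) =
          BRstep u2 (LSet2 u1 u2 p1 p2 n (j + 2)) (LSet u1 u2 p1 p2 n (j + 1)) :=
        Set.ext fun b => Dstep_LR_ge2 u2 p1 _ _ j b
      constructor
      · intro hlt
        have hA := (ih (j + 2) (by omega)).1 (by omega)
        have hB := (ih (j + 1) (by omega)).1 (by omega)
        constructor
        · rw [hset, hA.1, hB.2]; rfl
        · rw [hset2, hA.2, hB.1]; rfl
      · intro hle
        rcases Nat.lt_or_ge n (j + 2) with hn | hn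
        · obtain rfl : n = j + 1 := by omega
          have hA := (ih (j + 2) (by omega)).1 (by omega)
          have hB := (ih (j + 1) (by omega)).2 (by omega)
          have hLkR := Lk_subset_Rseq u1 u2 p1 p2 hp1 hp2 (j + 2)
          constructor
          · rw [hset, hA.1, hB.2]
            ext a
            constructor
            · rintro ⟨_, ν, hν⟩
              exact ⟨ν, hν⟩
            · intro h
              have h' : a ∈ (Lk u1 u2 p1 p2 (j + 2)).1 := h
              exact ⟨(Rseq_succ_subset u1 u2 (j + 1)).1 (hLkR.1 h'), h⟩
          · rw [hset2, hA.2, hB.1]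
            ext b
            constructor
            · rintro ⟨_, ν, hν⟩
              exact ⟨ν, hν⟩
            · intro h
              have h' : b ∈ (Lk u1 u2 p1 p2 (j + 2)).2 := h
              exact ⟨(Rseq_succ_subset u1 u2 (j + 1)).2 (hLkR.2 h'), h⟩
        · have hA := (ih (j + 2) (by omega)).2 hn
          have hB := (ih (j + 1) (by omega)).2 (by omega)
          constructor
          · rw [hset, hA.1, hB.2]
            ext a
            exact ⟨fun h => h.1, fun h => ⟨h, h⟩⟩
          · rw [hset2, hA.2, hB.1]
            ext b
            exact ⟨fun h => h.1, fun h => ⟨h, h⟩⟩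

/-- characterization of L-rationalizability: for `k ≥ 1`, if `n < k` it
equals `n`-rationalizability, and if `n ≥ k` it equals classic level-`k` behavior. -/
theorem L_characterization {A B : Type} [Fintype A] [Fintype B]
    (u1 : A → B → ℝ) (u2 : B → A → ℝ) (p1 : A → ℝ) (p2 : B → ℝ)
    (hp1 : IsDist p1) (hp2 : IsDist p2) (k : ℕ) (hk : 1 ≤ k) (n : ℕ) :
    (n < k →
      LSet u1 u2 p1 p2 n k = (Rseq u1 u2 n).1 ∧
      LSet2 u1 u2 p1 p2 n k = (Rseq u1 u2 n).2) ∧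
    (k ≤ n →
      LSet u1 u2 p1 p2 n k = (Lk u1 u2 p1 p2 k).1 ∧
      LSet2 u1 u2 p1 p2 n k = (Lk u1 u2 p1 p2 k).2) := by
  exact L_master u1 u2 p1 p2 hp1 hp2 n k hk
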